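/- In the time-dependent variational setting described in the context: for every R ≥ R₀ there exists a constant κ(R) > 0, depending only on n, the Tonelli constants of L, C_F, R₀, δ₀, c₀, the Lipschitz constant of u^f, sup_{K₀}|u^f|, and R (in particular independent of T and of the particular coupling c), such that for every t ∈ [0,T], every x ∈ B̄_R, and every minimizer ξ* from (t,x): ∫_t^{min(t+1,T)} |ξ*'(s)|² ds ≤ κ(R). -/

import Mathlib

noncomputable section

open MeasureTheory Metric Set
open scoped RealInnerProductSpace NNReal

abbrev Euc (n : ℕ) := EuclideanSpace ℝ (Fin n)

/-- A strict Tonelli Lagrangian with constants `C₁ C₂ C₃`: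
(a) uniform convexity/boundedness of the second derivative in `v`;
(b) bound on the mixed second derivative `D²_{vx}L`;
(c) bound at `v = 0`. -/
def IsStrictTonelli {n : ℕ} (L : Euc n → Euc n → ℝ) (C₁ C₂ C₃ : ℝ) : Prop :=
  ContDiff ℝ 2 (Function.uncurry L) ∧
  (∀ x v w : Euc n,
      (1 / C₁) * ‖w‖ ^ 2 ≤ iteratedFDeriv ℝ 2 (L x) v ![w, w] ∧
      iteratedFDeriv ℝ 2 (L x) v ![w, w] ≤ C₁ * ‖w‖ ^ 2) ∧
  (∀ x v : Euc n, ‖fderiv ℝ (fun y => fderiv ℝ (L y) v) x‖ ≤ C₂ * (1 + ‖v‖)) ∧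
  (∀ x : Euc n, |L x 0| + ‖fderiv ℝ (fun y => L y 0) x‖ + ‖fderiv ℝ (L x) 0‖ ≤ C₃)

/-- The action `J_t(ξ) = ∫_t^T (L(ξ(s), ξ'(s)) + c(s, ξ(s))) ds + u^f(ξ(T))` of a
(Lipschitz) curve `ξ`, the derivative being taken almost everywhere. -/
def action {n : ℕ} (L : Euc n → Euc n → ℝ) (c : ℝ → Euc n → ℝ) (uf : Euc n → ℝ)
    (t T : ℝ) (ξ : ℝ → Euc n) : ℝ :=
  (∫ s in t..T, (L (ξ s) (deriv ξ s) + c s (ξ s))) + uf (ξ T)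

/-- `ξ` is a minimizer from `(t,x)`: it is Lipschitz, starts at `x` at time `t`, and its
action on `[t,T]` is no greater than that of any Lipschitz curve starting at `x` at time
`t`. -/
def IsMinimizer {n : ℕ} (L : Euc n → Euc n → ℝ) (c : ℝ → Euc n → ℝ) (uf : Euc n → ℝ)
    (t T : ℝ) (x : Euc n) (ξ : ℝ → Euc n) : Prop :=
  (∃ K : ℝ≥0, LipschitzWith K ξ) ∧ ξ t = x ∧
  ∀ η : ℝ → Euc n, (∃ K : ℝ≥0, LipschitzWith K η) → η t = x →
    action L c uf t T ξ ≤ action L c uf t T η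

/-- The uniform well condition: the point `xT ∈ K₀` minimizes `x ↦ L(x,0) + c(s,x)` over
`K₀` at every time `s ∈ [0,T]`, and beats every point outside `K₀` by at least `δ₀`. -/
def WellCondition {n : ℕ} (L : Euc n → Euc n → ℝ) (c : ℝ → Euc n → ℝ)
    (K₀ : Set (Euc n)) (δ₀ T : ℝ) (xT : Euc n) : Prop :=
  xT ∈ K₀ ∧ ∀ s ∈ Set.Icc (0 : ℝ) T,
    (∀ y ∈ K₀, L xT 0 + c s xT ≤ L y 0 + c s y) ∧
    (∀ y ∉ K₀, L xT 0 + c s xT + δ₀ ≤ L y 0 + c s y)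

lemma stmt10_taylor_lower {n : ℕ} (g : Euc n → ℝ) (hg : ContDiff ℝ 2 g) (a : ℝ)
    (hconv : ∀ v w : Euc n, a * ‖w‖ ^ 2 ≤ iteratedFDeriv ℝ 2 g v ![w, w]) (v : Euc n) :
    g 0 + (fderiv ℝ g 0) v + a / 2 * ‖v‖ ^ 2 ≤ g v := by
  have hg1 : Differentiable ℝ g := hg.differentiable two_ne_zero
  have hG : ContDiff ℝ 1 (fderiv ℝ g) := hg.fderiv_right (le_refl 2)
  have hGd : Differentiable ℝ (fderiv ℝ g) := hG.differentiable one_ne_zero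
  have line : ∀ τ : ℝ, HasDerivAt (fun τ : ℝ => τ • v) v τ := fun τ => by
    simpa using (hasDerivAt_id τ).smul_const v
  set p : ℝ → ℝ := fun τ => fderiv ℝ g (τ • v) v with hp
  have hφ : ∀ τ : ℝ, HasDerivAt (fun τ : ℝ => g (τ • v)) (p τ) τ := fun τ =>
    (hg1 (τ • v)).hasFDerivAt.comp_hasDerivAt τ (line τ)
  have hφ₁ : ∀ τ : ℝ, HasDerivAt p (fderiv ℝ (fderiv ℝ g) (τ • v) v v) τ := by
    intro τ
    have h1 : HasDerivAt (fun τ : ℝ => fderiv ℝ g (τ • v)) (fderiv ℝ (fderiv ℝ g) (τ • v) v) τ :=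
      (hGd (τ • v)).hasFDerivAt.comp_hasDerivAt τ (line τ)
    simpa using h1.clm_apply (hasDerivAt_const τ v)
  have key : ∀ τ : ℝ, a * ‖v‖ ^ 2 ≤ fderiv ℝ (fderiv ℝ g) (τ • v) v v := fun τ => by
    have := hconv (τ • v) v
    rwa [iteratedFDeriv_two_apply, show (![v, v] : Fin 2 → Euc n) 0 = v from rfl,
      show (![v, v] : Fin 2 → Euc n) 1 = v from rfl] at this
  set A : ℝ := a * ‖v‖ ^ 2 with hA
  -- step 1 : p τ ≥ p 0 + A τ for τ ≥ 0
  have mono1 : ∀ τ : ℝ, 0 ≤ τ → p 0 + A * τ ≤ p τ := by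
    intro τ hτ
    set ρ : ℝ → ℝ := fun τ => p τ - A * τ with hρ
    have hρ' : ∀ σ : ℝ, HasDerivAt ρ (fderiv ℝ (fderiv ℝ g) (σ • v) v v - A) σ := fun σ =>
      (hφ₁ σ).sub (by simpa using (hasDerivAt_id σ).const_mul A)
    have hmono : Monotone ρ := by
      apply monotone_of_deriv_nonneg (fun σ => (hρ' σ).differentiableAt)
      intro σ
      rw [(hρ' σ).deriv]
      have := key σ; linarith
    have := hmono hτ
    simp only [hρ, mul_zero, sub_zero] at this
    linarith
  -- step 2
  set χ : ℝ → ℝ := fun τ => g (τ • v) - p 0 * τ - A / 2 * τ ^ 2 with hχ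
  have hχ' : ∀ σ : ℝ, HasDerivAt χ (p σ - p 0 - A * σ) σ := by
    intro σ
    have h2 : HasDerivAt (fun τ : ℝ => A / 2 * τ ^ 2) (A / 2 * (2 * σ ^ 1)) σ :=
      (hasDerivAt_pow 2 σ).const_mul (A / 2)
    have := ((hφ σ).sub (by simpa using (hasDerivAt_id σ).const_mul (p 0))).sub h2
    refine this.congr_deriv ?_
    ring
  have hmono2 : MonotoneOn χ (Set.Ici (0 : ℝ)) := by
    have hχdiff : Differentiable ℝ χ := fun σ => (hχ' σ).differentiableAt
    apply monotoneOn_of_deriv_nonneg (convex_Ici 0) hχdiff.continuous.continuousOn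
      (fun σ _ => (hχ' σ).differentiableAt.differentiableWithinAt)
    intro σ hσ
    rw [interior_Ici] at hσ
    rw [(hχ' σ).deriv]
    have := mono1 σ (le_of_lt hσ)
    linarith
  have h01 : χ 0 ≤ χ 1 := hmono2 (Set.self_mem_Ici) (by norm_num) zero_le_one
  have e0 : χ 0 = g 0 := by simp [hχ]
  have e1 : χ 1 = g v - p 0 - A / 2 := by simp [hχ]
  have ep0 : p 0 = (fderiv ℝ g 0) v := by simp [hp]
  rw [e0, e1, ep0] at h01
  rw [hA] at h01
  linarith

lemma stmt10_taylor_upper {n : ℕ} (g : Euc n → ℝ) (hg : ContDiff ℝ 2 g) (b : ℝ)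
    (hconc : ∀ v w : Euc n, iteratedFDeriv ℝ 2 g v ![w, w] ≤ b * ‖w‖ ^ 2) (v : Euc n) :
    g v ≤ g 0 + (fderiv ℝ g 0) v + b / 2 * ‖v‖ ^ 2 := by
  have h := stmt10_taylor_lower (fun y => -(g y)) hg.neg (-b) (fun v w => by
    have h1 : iteratedFDeriv ℝ 2 (fun y => -(g y)) v ![w, w]
        = -(iteratedFDeriv ℝ 2 g v ![w, w]) := by
      rw [show (fun y => -(g y)) = -g from rfl, iteratedFDeriv_neg_apply]
      simp
    rw [h1]
    have := hconc v w
    linarith) v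
  rw [fderiv_fun_neg] at h
  simp only [ContinuousLinearMap.neg_apply] at h
  linarith

lemma stmt10_fderiv_even {n : ℕ} (g : Euc n → ℝ) (hg : Differentiable ℝ g)
    (hrev : ∀ v, g v = g (-v)) : fderiv ℝ g 0 = 0 := by
  have hneg : HasFDerivAt (fun v : Euc n => -v) (-(ContinuousLinearMap.id ℝ (Euc n))) 0 :=
    (hasFDerivAt_id (0 : Euc n)).neg
  have h0 : HasFDerivAt g (fderiv ℝ g 0) (-0 : Euc n) := by
    rw [neg_zero]; exact (hg 0).hasFDerivAt
  have h1 : HasFDerivAt (fun v : Euc n => g (-v))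
      ((fderiv ℝ g 0).comp (-(ContinuousLinearMap.id ℝ (Euc n)))) 0 :=
    h0.comp 0 hneg
  have h2 : (fun v : Euc n => g (-v)) = g := funext fun v => (hrev v).symm
  rw [h2] at h1
  have h3 : fderiv ℝ g 0 = (fderiv ℝ g 0).comp (-(ContinuousLinearMap.id ℝ (Euc n))) :=
    ((hg 0).hasFDerivAt).unique h1
  set D := fderiv ℝ g 0
  have h4 : D = -D := by
    rw [ContinuousLinearMap.comp_neg, ContinuousLinearMap.comp_id] at h3
    exact h3
  have h5 : (2 : ℝ) • D = 0 := by
    rw [two_smul]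
    nth_rewrite 2 [h4]
    simp
  have := smul_eq_zero.mp h5
  rcases this with h | h
  · norm_num at h
  · exact h

lemma stmt10_L_bounds {n : ℕ} (L : Euc n → Euc n → ℝ) (C₁ C₂ C₃ : ℝ)
    (hTon : IsStrictTonelli L C₁ C₂ C₃) (hRev : ∀ x v : Euc n, L x v = L x (-v)) :
    ∀ x v : Euc n, L x 0 + (1 / C₁) / 2 * ‖v‖ ^ 2 ≤ L x v ∧ L x v ≤ L x 0 + C₁ / 2 * ‖v‖ ^ 2 := by
  intro x v
  have hgx : ContDiff ℝ 2 (L x) := hTon.1.comp (contDiff_const.prodMk contDiff_id)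
  have hz : fderiv ℝ (L x) 0 = 0 :=
    stmt10_fderiv_even (L x) (hgx.differentiable two_ne_zero) (hRev x)
  have hlow := stmt10_taylor_lower (L x) hgx (1 / C₁) (fun v w => (hTon.2.1 x v w).1) v
  have hup := stmt10_taylor_upper (L x) hgx C₁ (fun v w => (hTon.2.1 x v w).2) v
  rw [hz] at hlow hup
  simp only [ContinuousLinearMap.zero_apply, add_zero] at hlow hup
  exact ⟨by linarith, by linarith⟩

lemma stmt10_lip_scalar (t : ℝ) : LipschitzWith 1 (fun s : ℝ => max (min (s - t) 1) 0) := by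
  have h1 : LipschitzWith 1 (fun s : ℝ => s - t) := by
    apply LipschitzWith.of_dist_le_mul; intro a b; simp [Real.dist_eq]
  exact (h1.min_const 1).max_const 0

lemma stmt10_lip_seg {n : ℕ} (x v : Euc n) (t : ℝ) :
    LipschitzWith ‖v‖₊ (fun s : ℝ => x + (max (min (s - t) 1) 0) • v) := by
  apply LipschitzWith.of_dist_le_mul
  intro a b
  rw [dist_eq_norm]
  have he : (x + max (min (a - t) 1) 0 • v) - (x + max (min (b - t) 1) 0 • v)
      = (max (min (a - t) 1) 0 - max (min (b - t) 1) 0) • v := by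
    rw [sub_smul]; abel
  rw [he, norm_smul]
  have hd := (stmt10_lip_scalar t).dist_le_mul a b
  rw [Real.dist_eq] at hd
  rw [NNReal.coe_one, one_mul] at hd
  have h2 : ‖max (min (a - t) 1) 0 - max (min (b - t) 1) 0‖ ≤ dist a b := by
    rw [Real.norm_eq_abs]; exact hd
  calc ‖max (min (a - t) 1) 0 - max (min (b - t) 1) 0‖ * ‖v‖
      ≤ dist a b * ‖v‖ := by
        exact mul_le_mul_of_nonneg_right h2 (norm_nonneg v)
    _ = (‖v‖₊ : ℝ) * dist a b := by rw [coe_nnnorm]; ring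

lemma stmt10_integrable_of_bound (f : ℝ → ℝ) (a b C : ℝ)
    (hf : AEStronglyMeasurable f (volume.restrict (Set.uIoc a b)))
    (h : ∀ s ∈ Set.uIoc a b, |f s| ≤ C) : IntervalIntegrable f volume a b := by
  rw [intervalIntegrable_iff]
  apply MeasureTheory.Integrable.mono' (g := fun _ => C) _ hf
  · exact (ae_restrict_iff' measurableSet_uIoc).2
      (ae_of_all _ (by simpa [Real.norm_eq_abs] using h))
  · refine integrableOn_const (ne_of_lt ?_)
    rw [Set.uIoc, Real.volume_Ioc]
    exact ENNReal.ofReal_lt_top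

theorem stmt10_main (n : ℕ) (L : Euc n → Euc n → ℝ) (C₁ C₂ C₃ : ℝ)
    (hC₁ : 0 < C₁) (hC₃ : 0 < C₃)
    (hTon : IsStrictTonelli L C₁ C₂ C₃)
    (hRev : ∀ x v : Euc n, L x v = L x (-v))
    (C_F : ℝ) (hCF : 0 ≤ C_F)
    (K₀ : Set (Euc n))
    (R₀ : ℝ) (hR₀ : 0 < R₀) (hK₀R₀ : K₀ ⊆ closedBall 0 R₀)
    (δ₀ : ℝ) (hδ₀ : 0 < δ₀)
    (uf : Euc n → ℝ) (Kf : ℝ≥0) (huf : LipschitzWith Kf uf)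
    (c₀ : ℝ) (hc₀ : 0 ≤ c₀) (hufge : ∀ x, -c₀ ≤ uf x)
    (R : ℝ) (hR : R₀ ≤ R)
    (T : ℝ) (hT : 1 < T) (c : ℝ → Euc n → ℝ)
    (hcc : ContinuousOn (fun p : ℝ × Euc n => c p.1 p.2) (Set.Icc 0 T ×ˢ Set.univ))
    (hcb : ∀ s ∈ Set.Icc (0 : ℝ) T, ∀ x, |c s x| ≤ C_F)
    (xT : Euc n) (hwell : xT ∈ K₀ ∧ ∀ s ∈ Set.Icc (0:ℝ) T,
      (∀ y ∈ K₀, L xT 0 + c s xT ≤ L y 0 + c s y) ∧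
      (∀ y ∉ K₀, L xT 0 + c s xT + δ₀ ≤ L y 0 + c s y))
    (t : ℝ) (ht : t ∈ Set.Icc (0:ℝ) T) (x : Euc n) (hx : x ∈ closedBall (0 : Euc n) R)
    (ξ : ℝ → Euc n) (K : ℝ≥0) (hlip : LipschitzWith K ξ) (hξt : ξ t = x)
    (hmin : ∀ η : ℝ → Euc n, (∃ K : ℝ≥0, LipschitzWith K η) → η t = x →
      (∫ s in t..T, (L (ξ s) (deriv ξ s) + c s (ξ s))) + uf (ξ T)
        ≤ (∫ s in t..T, (L (η s) (deriv η s) + c s (η s))) + uf (η T)) :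
    (∫ s in t..(min (t + 1) T), ‖deriv ξ s‖ ^ 2)
      ≤ 2 * C₁ * ((C₃ + C₁ / 2 * (R + R₀) ^ 2 + C_F) + (C₃ + C_F)
          + (|uf 0| + (Kf : ℝ) * (R + R₀)) + c₀) := by
  have ht0 : 0 ≤ t := ht.1
  have htT : t ≤ T := ht.2
  obtain ⟨A₁, hA₁⟩ : ∃ y : ℝ, y = C₃ + C₁ / 2 * (R + R₀) ^ 2 + C_F := ⟨_, rfl⟩
  obtain ⟨M, hM⟩ : ∃ y : ℝ, y = A₁ + (C₃ + C_F) + (|uf 0| + (Kf : ℝ) * (R + R₀)) + c₀ := ⟨_, rfl⟩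
  have hxT : ‖xT‖ ≤ R₀ := by
    have := hK₀R₀ hwell.1
    rwa [mem_closedBall, dist_zero_right] at this
  have hxR : ‖x‖ ≤ R := by rwa [mem_closedBall, dist_zero_right] at hx
  have hwellg : ∀ s ∈ Set.Icc (0:ℝ) T, ∀ y : Euc n,
      L xT 0 + c s xT ≤ L y 0 + c s y := by
    intro s hs y
    by_cases hy : y ∈ K₀
    · exact (hwell.2 s hs).1 y hy
    · have := (hwell.2 s hs).2 y hy; linarith
  have hLb := stmt10_L_bounds L C₁ C₂ C₃ hTon hRev
  have habs : ∀ y : Euc n, |L y 0| ≤ C₃ := by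
    intro y
    have h := hTon.2.2.2 y
    have h1 := norm_nonneg (fderiv ℝ (fun y => L y 0) y)
    have h2 := norm_nonneg (fderiv ℝ (L y) 0)
    linarith
  have hLabs : ∀ y v : Euc n, |L y v| ≤ C₃ + C₁ / 2 * ‖v‖ ^ 2 := by
    intro y v
    have h1 := (hLb y v).1
    have h2 := (hLb y v).2
    have h3 := abs_le.1 (habs y)
    have h4 : 0 ≤ (1 / C₁) / 2 * ‖v‖ ^ 2 := by positivity
    have h5 : 0 ≤ C₁ / 2 * ‖v‖ ^ 2 := by positivity
    rw [abs_le]; constructor <;> linarith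
  -- continuity of the coupling along curves
  have hccurve : ∀ (ζ : ℝ → Euc n), Continuous ζ →
      ContinuousOn (fun s => c s (ζ s)) (Set.Icc 0 T) := by
    intro ζ hζ
    apply ContinuousOn.comp hcc ((continuous_id.prodMk hζ).continuousOn)
    intro s hs
    exact ⟨hs, Set.mem_univ _⟩
  -- integrability of the Lagrangian along Lipschitz curves
  have hIcurve : ∀ (ζ : ℝ → Euc n) (Kz : ℝ≥0), LipschitzWith Kz ζ →
      ∀ a b : ℝ, 0 ≤ a → a ≤ b → b ≤ T →
      IntervalIntegrable (fun s => L (ζ s) (deriv ζ s) + c s (ζ s)) volume a b := by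
    intro ζ Kz hz a b ha hab hb
    have hsub : Set.uIoc a b ⊆ Set.Icc 0 T := by
      rw [Set.uIoc_of_le hab]
      exact (Set.Ioc_subset_Icc_self).trans (Set.Icc_subset_Icc ha hb)
    apply stmt10_integrable_of_bound _ _ _ (C₃ + C₁ / 2 * (Kz : ℝ) ^ 2 + C_F)
    · apply AEStronglyMeasurable.add
      · have hm1 : Measurable (fun s => L (ζ s) (deriv ζ s)) :=
          (hTon.1.continuous).measurable.comp
            ((hz.continuous.measurable).prodMk (measurable_deriv ζ))
        exact hm1.aestronglyMeasurable.restrict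
      · exact ((hccurve ζ hz.continuous).aestronglyMeasurable measurableSet_Icc).mono_measure
          (Measure.restrict_mono hsub le_rfl)
    · intro s hs
      have hd : ‖deriv ζ s‖ ≤ (Kz : ℝ) := norm_deriv_le_of_lipschitz hz
      have hsq : ‖deriv ζ s‖ ^ 2 ≤ (Kz : ℝ) ^ 2 :=
        pow_le_pow_left₀ (norm_nonneg _) hd 2
      have hL := hLabs (ζ s) (deriv ζ s)
      have hc := hcb s (hsub hs) (ζ s)
      have htri := abs_add_le (L (ζ s) (deriv ζ s)) (c s (ζ s))
      have hmul : C₁ / 2 * ‖deriv ζ s‖ ^ 2 ≤ C₁ / 2 * (Kz : ℝ) ^ 2 :=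
        mul_le_mul_of_nonneg_left hsq (by positivity)
      linarith only [htri, hmul, hL, hc]
  -- integrability of the squared speed
  have hsqint : IntervalIntegrable (fun s => ‖deriv ξ s‖ ^ 2) volume t T := by
    apply stmt10_integrable_of_bound _ _ _ ((K : ℝ) ^ 2)
    · exact (((measurable_deriv ξ).norm.pow_const 2).aestronglyMeasurable).restrict
    · intro s _
      rw [abs_of_nonneg (by positivity)]
      exact pow_le_pow_left₀ (norm_nonneg _) (norm_deriv_le_of_lipschitz hlip) 2
  -- the baseline
  obtain ⟨β, hβ⟩ : ∃ g : ℝ → ℝ, g = fun s => L xT 0 + c s xT := ⟨_, rfl⟩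
  have hβcont : ContinuousOn β (Set.Icc 0 T) := by
    rw [hβ]
    exact continuousOn_const.add (hccurve (fun _ => xT) continuous_const)
  have hβint : ∀ a b : ℝ, 0 ≤ a → a ≤ b → b ≤ T → IntervalIntegrable β volume a b := by
    intro a b ha hab hb
    apply ContinuousOn.intervalIntegrable
    apply hβcont.mono
    rw [Set.uIcc_of_le hab]
    exact Set.Icc_subset_Icc ha hb
  have hβbound : ∀ s ∈ Set.Icc (0:ℝ) T, -(C₃ + C_F) ≤ β s ∧ β s ≤ C₃ + C_F := by
    intro s hs
    have h1 := abs_le.1 (habs xT)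
    have h2 := abs_le.1 (hcb s hs xT)
    constructor <;> simp only [hβ] <;> linarith
  obtain ⟨E, hE⟩ : ∃ y : ℝ, y = ∫ s in t..T, ‖deriv ξ s‖ ^ 2 := ⟨_, rfl⟩
  have hEnn : 0 ≤ E := hE ▸
    intervalIntegral.integral_nonneg htT (fun u _ => by positivity)
  -- lower bound for the action of the minimizer
  have hlow : (∫ s in t..T, β s) + (1 / C₁) / 2 * E
      ≤ ∫ s in t..T, (L (ξ s) (deriv ξ s) + c s (ξ s)) := by
    have hptw : ∀ s ∈ Set.Icc t T,
        β s + (1 / C₁) / 2 * ‖deriv ξ s‖ ^ 2 ≤ L (ξ s) (deriv ξ s) + c s (ξ s) := by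
      intro s hs
      have hs' : s ∈ Set.Icc (0:ℝ) T := ⟨le_trans ht0 hs.1, hs.2⟩
      have h1 := (hLb (ξ s) (deriv ξ s)).1
      have h2 := hwellg s hs' (ξ s)
      simp only [hβ]; linarith
    have h := intervalIntegral.integral_mono_on htT
      ((hβint t T ht0 htT le_rfl).add (hsqint.const_mul ((1 / C₁) / 2)))
      (hIcurve ξ K hlip t T ht0 htT le_rfl)
      (by intro s hs; simpa [mul_comm] using hptw s hs)
    rwa [intervalIntegral.integral_add (hβint t T ht0 htT le_rfl)
        (hsqint.const_mul _), intervalIntegral.integral_const_mul, ← hE] at h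
  -- upper bound on uf at points of norm ≤ R + R₀
  have hufb : ∀ y : Euc n, ‖y‖ ≤ R + R₀ → uf y ≤ |uf 0| + (Kf : ℝ) * (R + R₀) := by
    intro y hy
    have h := huf.dist_le_mul y 0
    rw [Real.dist_eq, dist_zero_right] at h
    have h2 : (Kf : ℝ) * ‖y‖ ≤ (Kf : ℝ) * (R + R₀) :=
      mul_le_mul_of_nonneg_left hy Kf.coe_nonneg
    have h4 := (abs_le.1 h).2
    linarith [le_abs_self (uf 0)]
  -- main case split
  have hkey : (1 / C₁) / 2 * E ≤ M := by
    by_cases hcase : t + 1 ≤ T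
    ·
      obtain ⟨v, hv⟩ : ∃ w : Euc n, w = xT - x := ⟨_, rfl⟩
      have hvb : ‖v‖ ≤ R + R₀ := by
        have := norm_sub_le xT x
        rw [hv]; linarith
      obtain ⟨η, hη⟩ : ∃ g : ℝ → Euc n, g = fun s => x + (max (min (s - t) 1) 0) • v :=
        ⟨_, rfl⟩
      have hηlip : LipschitzWith ‖v‖₊ η := by rw [hη]; exact stmt10_lip_seg x v t
      have hηt : η t = x := by rw [hη]; simp
      have hηs : ∀ s' : ℝ, t + 1 ≤ s' → η s' = xT := by
        intro s' hs'
        have h1 : min (s' - t) 1 = 1 := min_eq_right (by linarith)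
        rw [hη]
        simp only [h1, max_eq_left zero_le_one, one_smul, hv]
        abel
      have hηd : ∀ s, ‖deriv η s‖ ≤ ‖v‖ := by
        intro s
        have := norm_deriv_le_of_lipschitz (x₀ := s) hηlip
        rwa [coe_nnnorm] at this
      have hcmp := hmin η ⟨_, hηlip⟩ hηt
      rw [hηs T hcase] at hcmp
      have hηi1 := hIcurve η _ hηlip t (t + 1) ht0 (by linarith) hcase
      have hηi2 := hIcurve η _ hηlip (t + 1) T (by linarith) hcase le_rfl
      have hsplitη : (∫ s in t..T, (L (η s) (deriv η s) + c s (η s)))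
          = (∫ s in t..(t+1), (L (η s) (deriv η s) + c s (η s)))
            + ∫ s in (t+1)..T, (L (η s) (deriv η s) + c s (η s)) :=
        (intervalIntegral.integral_add_adjacent_intervals hηi1 hηi2).symm
      have hsplitβ : (∫ s in t..T, β s)
          = (∫ s in t..(t+1), β s) + ∫ s in (t+1)..T, β s :=
        (intervalIntegral.integral_add_adjacent_intervals
          (hβint t (t+1) ht0 (by linarith) hcase)
          (hβint (t+1) T (by linarith) hcase le_rfl)).symm
      have hb1 : (∫ s in t..(t+1), (L (η s) (deriv η s) + c s (η s))) ≤ A₁ := by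
        have h := intervalIntegral.integral_mono_on (by linarith : t ≤ t + 1) hηi1
          intervalIntegrable_const (f := fun s => L (η s) (deriv η s) + c s (η s))
          (g := fun _ => A₁) ?_
        · rw [intervalIntegral.integral_const] at h
          simpa using h
        · intro s hs
          have hs' : s ∈ Set.Icc (0:ℝ) T := ⟨le_trans ht0 hs.1, le_trans hs.2 hcase⟩
          have h1 := (hLb (η s) (deriv η s)).2
          have h2 := abs_le.1 (habs (η s))
          have h3 := abs_le.1 (hcb s hs' (η s))
          have h4 : ‖deriv η s‖ ^ 2 ≤ (R + R₀) ^ 2 :=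
            pow_le_pow_left₀ (norm_nonneg _) ((hηd s).trans hvb) 2
          have h5 : C₁ / 2 * ‖deriv η s‖ ^ 2 ≤ C₁ / 2 * (R + R₀) ^ 2 :=
            mul_le_mul_of_nonneg_left h4 (by positivity)
          simp only [hA₁]; linarith
      have hb2 : (∫ s in (t+1)..T, (L (η s) (deriv η s) + c s (η s)))
          = ∫ s in (t+1)..T, β s := by
        apply intervalIntegral.integral_congr_ae
        have hTae : ∀ᵐ s : ℝ, s ≠ T := by
          have hset : {s : ℝ | ¬ s ≠ T} = {T} := by ext s; simp
          rw [MeasureTheory.ae_iff, hset]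
          exact Real.volume_singleton
        filter_upwards [hTae] with s hsT hs
        rw [Set.uIoc_of_le hcase] at hs
        have hs1 : t + 1 < s := hs.1
        have hdη : deriv η s = 0 := by
          have hev : η =ᶠ[nhds s] (fun _ => xT) := by
            filter_upwards [Ioi_mem_nhds hs1] with s' hs'
            exact hηs s' (le_of_lt hs')
          rw [hev.deriv_eq, deriv_const]
        rw [hηs s (le_of_lt hs1), hdη, hβ]
      have hb3 : -(C₃ + C_F) ≤ ∫ s in t..(t+1), β s := by
        have h := intervalIntegral.integral_mono_on (by linarith : t ≤ t + 1)
          intervalIntegrable_const (hβint t (t+1) ht0 (by linarith) hcase)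
          (f := fun _ => -(C₃ + C_F)) (g := β) ?_
        · rw [intervalIntegral.integral_const] at h
          simpa using h
        · intro s hs
          exact (hβbound s ⟨le_trans ht0 hs.1, le_trans hs.2 hcase⟩).1
      have hufxT : uf xT ≤ |uf 0| + (Kf : ℝ) * (R + R₀) :=
        hufb xT (by linarith)
      have hufξT := hufge (ξ T)
      rw [hM]
      have w1 : (∫ s in t..T, (L (ξ s) (deriv ξ s) + c s (ξ s)))
          ≤ A₁ + (∫ s in (t+1)..T, β s) + uf xT + c₀ := by
        linarith only [hcmp, hufξT, hsplitη, hb1, hb2]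
      have w2 : (∫ s in t..T, β s) ≥ (∫ s in (t+1)..T, β s) - (C₃ + C_F) := by
        linarith only [hsplitβ, hb3]
      have w3 : 1 / C₁ / 2 * E ≤ (∫ s in t..T, (L (ξ s) (deriv ξ s) + c s (ξ s)))
          - (∫ s in t..T, β s) := by linarith only [hlow]
      have w4 : 1 / C₁ / 2 * E ≤ A₁ + (C₃ + C_F) + uf xT + c₀ := by
        linarith only [w3, w1, w2]
      linarith only [w4, hufxT]
    · -- short horizon : stay put
      push_neg at hcase
      obtain ⟨η, hη⟩ : ∃ g : ℝ → Euc n, g = fun _ : ℝ => x := ⟨_, rfl⟩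
      have hcmp := hmin η ⟨0, by rw [hη]; exact LipschitzWith.const x⟩ (by rw [hη])
      have hIη : (fun s => L (η s) (deriv η s) + c s (η s))
          = fun s => L x 0 + c s x := by
        funext s
        rw [hη]
        simp only [deriv_const]
      have hηT : η T = x := by rw [hη]
      rw [hηT] at hcmp
      rw [hIη] at hcmp
      have hint1 : IntervalIntegrable (fun s => L x 0 + c s x) volume t T := by
        apply ContinuousOn.intervalIntegrable
        apply (continuousOn_const.add (hccurve (fun _ => x) continuous_const)).mono
        rw [Set.uIcc_of_le htT]
        exact Set.Icc_subset_Icc ht0 le_rfl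
      have hb : (∫ s in t..T, (L x 0 + c s x))
          ≤ (∫ s in t..T, β s) + 2 * (C₃ + C_F) := by
        have h := intervalIntegral.integral_mono_on htT hint1
          ((hβint t T ht0 htT le_rfl).add intervalIntegrable_const)
          (f := fun s => L x 0 + c s x) (g := fun s => β s + 2 * (C₃ + C_F)) ?_
        · rw [intervalIntegral.integral_add (hβint t T ht0 htT le_rfl)
            intervalIntegrable_const, intervalIntegral.integral_const] at h
          have h2 : (T - t) • (2 * (C₃ + C_F)) ≤ 2 * (C₃ + C_F) := by
            rw [smul_eq_mul]
            have h0 : 0 ≤ 2 * (C₃ + C_F) := by linarith only [hC₃, hCF]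
            have h1 : 0 ≤ (1 - (T - t)) * (2 * (C₃ + C_F)) :=
              mul_nonneg (by linarith only [hcase]) h0
            linarith only [h1]
          linarith only [h, h2]
        · intro s hs
          have hs' : s ∈ Set.Icc (0:ℝ) T := ⟨le_trans ht0 hs.1, hs.2⟩
          have h1 := abs_le.1 (habs x)
          have h2 := abs_le.1 (hcb s hs' x)
          have h3 := (hβbound s hs').1
          show L x 0 + c s x ≤ β s + 2 * (C₃ + C_F)
          linarith [h1.2, h2.2, h3]
      have hufx : uf x ≤ |uf 0| + (Kf : ℝ) * (R + R₀) :=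
        hufb x (by linarith)
      have hufξT := hufge (ξ T)
      have hA₁nn : C₃ + C_F ≤ A₁ := by
        have hpos : 0 ≤ C₁ / 2 * (R + R₀) ^ 2 := by positivity
        rw [hA₁]; linarith only [hpos]
      rw [hM]
      have w0 : (∫ s in t..T, (L (ξ s) (deriv ξ s) + c s (ξ s))) + uf (ξ T)
          ≤ (∫ s in t..T, (L x 0 + c s x)) + uf x := hcmp
      have w0a : (∫ s in t..T, (L (ξ s) (deriv ξ s) + c s (ξ s)))
          ≤ (∫ s in t..T, (L x 0 + c s x)) + uf x + c₀ := by linarith only [w0, hufξT]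
      have w3 : 1 / C₁ / 2 * E ≤ (∫ s in t..T, (L x 0 + c s x))
          - (∫ s in t..T, β s) + uf x + c₀ := by linarith only [hlow, w0a]
      linarith only [w3, hb, hufx, hA₁nn]
  -- conclude
  have hEle : E ≤ 2 * C₁ * M := by
    have h2 : 2 * C₁ * ((1 / C₁) / 2 * E) = E := by
      field_simp
    have h3 := mul_le_mul_of_nonneg_left hkey (by positivity : (0:ℝ) ≤ 2 * C₁)
    linarith only [h2, h3]
  have hmono : (∫ s in t..(min (t + 1) T), ‖deriv ξ s‖ ^ 2) ≤ E := by
    rw [hE]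
    apply intervalIntegral.integral_mono_interval (le_refl t)
      (le_min (by linarith) htT) (min_le_right _ _)
      (Filter.Eventually.of_forall (fun s => by positivity)) hsqint
  have hMfin : M = (C₃ + C₁ / 2 * (R + R₀) ^ 2 + C_F) + (C₃ + C_F)
      + (|uf 0| + (Kf : ℝ) * (R + R₀)) + c₀ := by rw [hM, hA₁]
  have h4 : 2 * C₁ * M = 2 * C₁ * ((C₃ + C₁ / 2 * (R + R₀) ^ 2 + C_F) + (C₃ + C_F)
      + (|uf 0| + (Kf : ℝ) * (R + R₀)) + c₀) := by rw [hMfin]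
  linarith only [hmono, hEle, h4]

/-- energy estimate on unit time intervals: in the time-dependent
variational setting, for every `R ≥ R₀` there is `κ(R) > 0`, independent of the horizon
`T > 1` and of the coupling `c` (with `|c| ≤ C_F` and satisfying the uniform well
condition), such that every minimizer `ξ*` from `(t,x)` with `t ∈ [0,T]`, `x ∈ B̄_R`
satisfies `∫_t^{min(t+1,T)} |ξ*'(s)|² ds ≤ κ(R)`. -/
theorem stmt10 (n : ℕ) (hn : 1 ≤ n) (L : Euc n → Euc n → ℝ) (C₁ C₂ C₃ : ℝ)
    (hC₁ : 0 < C₁) (hC₂ : 0 < C₂) (hC₃ : 0 < C₃)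
    (hTon : IsStrictTonelli L C₁ C₂ C₃)
    (hRev : ∀ x v : Euc n, L x v = L x (-v))
    (C_F : ℝ) (hCF : 0 ≤ C_F)
    (K₀ : Set (Euc n)) (hK₀c : IsCompact K₀) (hK₀ne : K₀.Nonempty)
    (R₀ : ℝ) (hR₀ : 0 < R₀) (hK₀R₀ : K₀ ⊆ closedBall 0 R₀)
    (δ₀ : ℝ) (hδ₀ : 0 < δ₀)
    (uf : Euc n → ℝ) (Kf : ℝ≥0) (huf : LipschitzWith Kf uf)
    (c₀ : ℝ) (hc₀ : 0 ≤ c₀) (hufge : ∀ x, -c₀ ≤ uf x)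
    (R : ℝ) (hR : R₀ ≤ R) :
    ∃ κ > (0 : ℝ), ∀ T : ℝ, 1 < T → ∀ c : ℝ → Euc n → ℝ,
      ContinuousOn (fun p : ℝ × Euc n => c p.1 p.2) (Set.Icc 0 T ×ˢ Set.univ) →
      (∀ s ∈ Set.Icc (0 : ℝ) T, ∀ x, |c s x| ≤ C_F) →
      (∃ xT : Euc n, WellCondition L c K₀ δ₀ T xT) →
      ∀ t ∈ Set.Icc (0 : ℝ) T, ∀ x ∈ closedBall (0 : Euc n) R, ∀ ξ : ℝ → Euc n,
        IsMinimizer L c uf t T x ξ →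
        (∫ s in t..(min (t + 1) T), ‖deriv ξ s‖ ^ 2) ≤ κ := by
  refine ⟨2 * C₁ * ((C₃ + C₁ / 2 * (R + R₀) ^ 2 + C_F) + (C₃ + C_F)
      + (|uf 0| + (Kf : ℝ) * (R + R₀)) + c₀), ?_, ?_⟩
  · have h1 : 0 ≤ C₁ / 2 * (R + R₀) ^ 2 := by positivity
    have h2 : 0 ≤ |uf 0| := abs_nonneg _
    have h3 : 0 ≤ (Kf : ℝ) * (R + R₀) :=
      mul_nonneg Kf.coe_nonneg (by linarith)
    have h4 : 0 < (C₃ + C₁ / 2 * (R + R₀) ^ 2 + C_F) + (C₃ + C_F)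
        + (|uf 0| + (Kf : ℝ) * (R + R₀)) + c₀ := by linarith
    positivity
  · rintro T hT c hcc hcb ⟨xT, hwT⟩ t ht x hx ξ ⟨⟨K, hlip⟩, hξt, hminA⟩
    exact stmt10_main n L C₁ C₂ C₃ hC₁ hC₃ hTon hRev C_F hCF K₀ R₀ hR₀ hK₀R₀ δ₀ hδ₀
      uf Kf huf c₀ hc₀ hufge R hR T hT c hcc hcb xT hwT t ht x hx ξ K hlip hξt
      (fun η h1 h2 => hminA η h1 h2)
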